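/- Let x : ℤ² → ℝ be such that x(v) > 0 for every v = (v₁,v₂) with v₁+v₂ ≥ 0, and such that for every v with v₁+v₂ ≥ 0: x(v+(1,1)) = 3x(v) + x(v+(1,0)) + x(v+(0,1)) + 2√2·√((x(v)+x(v+(1,0)))·(x(v)+x(v+(0,1)))). Then for every v = (v₁,v₂) with v₁+v₂ ≥ 2: ∏_{ε∈{−1,1}²} Qv(x,ε) = −E(x,v), with Q and E defined by the same formulas over ℝ. -/

import Mathlib

open Finset

noncomputable section

abbrev Z2 := ℤ × ℤ

/-- The 4 sign vectors in {-1,1}². -/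
def signs2 : Finset Z2 := ({-1, 1} : Finset ℤ) ×ˢ ({-1, 1} : Finset ℤ)

/-- The corner derivative `Q^C_v` (real version). -/
def cornerQR (x : Z2 → ℝ) (v ε : Z2) : ℝ :=
  (1 / (2 * Real.sqrt 2)) *
    (x (v + ε) - x (v + (ε.1, 0)) - x (v + (0, ε.2)) - 3 * x v)

/-- The product over the 4 lattice edges incident to `v` (real version). -/
def edgeProdR (x : Z2 → ℝ) (v : Z2) : ℝ :=
  (x v + x (v + (1,0))) * (x v + x (v + (-1,0))) *
  (x v + x (v + (0,1))) * (x v + x (v + (0,-1)))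

lemma key (a b c Y : ℝ) (ha : 0 ≤ a) (hb : 0 ≤ b) (hc : 0 ≤ c)
    (hY : Y = 3*a + b + c + 2*Real.sqrt 2 * Real.sqrt ((a+b)*(a+c))) :
    a - b - c - 3*Y = -(2*Real.sqrt 2) * (Real.sqrt (Y+b) * Real.sqrt (Y+c)) ∧
    b - Y - a - 3*c = -(2*Real.sqrt 2) * (Real.sqrt (a+c) * Real.sqrt (Y+c)) := by
  set s := Real.sqrt (a+b) with hsdef
  set t := Real.sqrt (a+c) with htdef
  have hs : s^2 = a+b := Real.sq_sqrt (by linarith)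
  have ht : t^2 = a+c := Real.sq_sqrt (by linarith)
  have hsn : 0 ≤ s := Real.sqrt_nonneg _
  have htn : 0 ≤ t := Real.sqrt_nonneg _
  have h2 : Real.sqrt 2 ^ 2 = 2 := Real.sq_sqrt (by norm_num)
  have h2n : 0 ≤ Real.sqrt 2 := Real.sqrt_nonneg _
  have hst : Real.sqrt ((a+b)*(a+c)) = s * t := Real.sqrt_mul (by linarith) _
  rw [hst] at hY
  have hYb : Real.sqrt (Y+b) = Real.sqrt 2 * s + t := by
    rw [show Y + b = (Real.sqrt 2 * s + t)^2 by linear_combination hY - s^2*h2 - 2*hs - ht]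
    exact Real.sqrt_sq (by positivity)
  have hYc : Real.sqrt (Y+c) = s + Real.sqrt 2 * t := by
    rw [show Y + c = (s + Real.sqrt 2 * t)^2 by linear_combination hY - t^2*h2 - hs - 2*ht]
    exact Real.sqrt_sq (by positivity)
  constructor
  · rw [hYb, hYc]
    linear_combination -3*hY + (2*s^2+2*t^2+2*Real.sqrt 2*s*t)*h2 + 4*hs + 4*ht
  · rw [hYc]
    linear_combination -hY + 2*t^2*h2 + 4*ht

lemma div_helperN (z w : ℝ) (h : w = -(2*Real.sqrt 2) * z) :
    1/(2*Real.sqrt 2) * w = -z := by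
  have h2 : Real.sqrt 2 ≠ 0 := by positivity
  rw [h]; field_simp

lemma div_helperP (z w : ℝ) (h : w = 2*Real.sqrt 2 * z) :
    1/(2*Real.sqrt 2) * w = z := by
  have h2 : Real.sqrt 2 ≠ 0 := by positivity
  rw [h]; field_simp

/-- Theorem s_holo_pos_thm. -/
theorem statement13 (x : Z2 → ℝ)
    (hpos : ∀ v : Z2, 0 ≤ v.1 + v.2 → 0 < x v)
    (hrec : ∀ v : Z2, 0 ≤ v.1 + v.2 →
      x (v + (1,1)) = 3 * x v + x (v + (1,0)) + x (v + (0,1))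
        + 2 * Real.sqrt 2 *
            Real.sqrt ((x v + x (v + (1,0))) * (x v + x (v + (0,1))))) :
    ∀ v : Z2, 2 ≤ v.1 + v.2 →
      ∏ ε ∈ signs2, cornerQR x v ε = - edgeProdR x v := by
  intro v hv
  have pe : ∀ a b c d : ℤ, v + ((a,b) : Z2) + ((c,d) : Z2) = v + ((a+c, b+d) : Z2) := by
    intro a b c d
    ext <;> simp <;> ring
  have hsum : ∀ a b : ℤ, -2 ≤ a + b → 0 ≤ (v + ((a,b):Z2)).1 + (v + ((a,b):Z2)).2 := by
    intro a b hab
    simp only [Prod.fst_add, Prod.snd_add]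
    omega
  have hp : ∀ a b : ℤ, -2 ≤ a + b → 0 < x (v + ((a,b):Z2)) := fun a b hab => hpos _ (hsum a b hab)
  have pv : 0 < x v := hpos v (by omega)
  have pA : 0 < x (v + ((1,0):Z2)) := hp 1 0 (by norm_num)
  have pB : 0 < x (v + ((0,1):Z2)) := hp 0 1 (by norm_num)
  have pp : 0 < x (v + ((-1,0):Z2)) := hp (-1) 0 (by norm_num)
  have pq : 0 < x (v + ((0,-1):Z2)) := hp 0 (-1) (by norm_num)
  have pd : 0 < x (v + ((-1,-1):Z2)) := hp (-1) (-1) (by norm_num)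
  -- recurrence at v + (-1,-1)
  have R1 := hrec (v + (-1,-1)) (hsum (-1) (-1) (by norm_num))
  simp only [pe] at R1
  norm_num [Prod.mk_zero_zero] at R1
  -- recurrence at v + (0,-1)
  have R2 := hrec (v + (0,-1)) (hsum 0 (-1) (by norm_num))
  simp only [pe] at R2
  norm_num [Prod.mk_zero_zero] at R2
  -- recurrence at v + (-1,0)
  have R3 := hrec (v + (-1,0)) (hsum (-1) 0 (by norm_num))
  simp only [pe] at R3
  norm_num [Prod.mk_zero_zero] at R3
  -- recurrence at v
  have R0 := hrec v (by omega)
  -- massage R3 into key's shape: B = 3p + r + X + 2√2√((p+r)(p+X))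
  have R3' : x (v + ((0,1):Z2)) = 3 * x (v + ((-1,0):Z2)) + x (v + ((-1,1):Z2)) + x v
      + 2 * Real.sqrt 2 * Real.sqrt ((x (v + ((-1,0):Z2)) + x (v + ((-1,1):Z2))) * (x (v + ((-1,0):Z2)) + x v)) := by
    rw [mul_comm (x (v + ((-1,0):Z2)) + x v) (x (v + ((-1,0):Z2)) + x (v + ((-1,1):Z2)))] at R3
    linarith [R3]
  have K1 := key (x (v + ((-1,-1):Z2))) (x (v + ((0,-1):Z2))) (x (v + ((-1,0):Z2))) (x v)
      pd.le pq.le pp.le R1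
  have K2 := key (x (v + ((0,-1):Z2))) (x (v + ((1,-1):Z2))) (x v) (x (v + ((1,0):Z2)))
      pq.le (hp 1 (-1) (by norm_num)).le pv.le R2
  have K3 := key (x (v + ((-1,0):Z2))) (x (v + ((-1,1):Z2))) (x v) (x (v + ((0,1):Z2)))
      pp.le (hp (-1) 1 (by norm_num)).le pv.le R3'
  -- normalize sqrt arguments to the "x v + _" form
  have c1 : x v + x (v + ((0,-1):Z2)) = x (v + ((0,-1):Z2)) + x v := add_comm _ _
  have c2 : x v + x (v + ((-1,0):Z2)) = x (v + ((-1,0):Z2)) + x v := add_comm _ _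
  have c3 : x v + x (v + ((1,0):Z2)) = x (v + ((1,0):Z2)) + x v := add_comm _ _
  have c4 : x v + x (v + ((0,1):Z2)) = x (v + ((0,1):Z2)) + x v := add_comm _ _
  -- K1 already in the right form
  rw [← c1, ← c3] at K2
  rw [← c2, ← c4] at K3
  -- the four corner derivatives
  have Qmm : cornerQR x v (-1,-1) = -(Real.sqrt (x v + x (v + ((0,-1):Z2))) * Real.sqrt (x v + x (v + ((-1,0):Z2)))) := by
    simp only [cornerQR]
    apply div_helperN
    linear_combination K1.1
  have Qpm : cornerQR x v (1,-1) = -(Real.sqrt (x v + x (v + ((0,-1):Z2))) * Real.sqrt (x v + x (v + ((1,0):Z2)))) := by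
    simp only [cornerQR]
    apply div_helperN
    linear_combination K2.2
  have Qmp : cornerQR x v (-1,1) = -(Real.sqrt (x v + x (v + ((-1,0):Z2))) * Real.sqrt (x v + x (v + ((0,1):Z2)))) := by
    simp only [cornerQR]
    apply div_helperN
    linear_combination K3.2
  have Qpp : cornerQR x v (1,1) = Real.sqrt (x v + x (v + ((1,0):Z2))) * Real.sqrt (x v + x (v + ((0,1):Z2))) := by
    simp only [cornerQR]
    apply div_helperP
    rw [← Real.sqrt_mul (by positivity)]
    linear_combination R0
  -- evaluate the product
  have hne : ((-1 : ℤ)) ≠ 1 := by norm_num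
  show ∏ ε ∈ (({-1, 1} : Finset ℤ) ×ˢ ({-1, 1} : Finset ℤ)), cornerQR x v ε = - edgeProdR x v
  rw [Finset.prod_product, Finset.prod_pair hne, Finset.prod_pair hne, Finset.prod_pair hne]
  rw [Qmm, Qmp, Qpm, Qpp]
  simp only [edgeProdR]
  have mA : Real.sqrt (x v + x (v + ((1,0):Z2))) * Real.sqrt (x v + x (v + ((1,0):Z2))) = x v + x (v + ((1,0):Z2)) :=
    Real.mul_self_sqrt (by positivity)
  have mP : Real.sqrt (x v + x (v + ((-1,0):Z2))) * Real.sqrt (x v + x (v + ((-1,0):Z2))) = x v + x (v + ((-1,0):Z2)) :=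
    Real.mul_self_sqrt (by positivity)
  have mB : Real.sqrt (x v + x (v + ((0,1):Z2))) * Real.sqrt (x v + x (v + ((0,1):Z2))) = x v + x (v + ((0,1):Z2)) :=
    Real.mul_self_sqrt (by positivity)
  have mQ : Real.sqrt (x v + x (v + ((0,-1):Z2))) * Real.sqrt (x v + x (v + ((0,-1):Z2))) = x v + x (v + ((0,-1):Z2)) :=
    Real.mul_self_sqrt (by positivity)
  set sA := Real.sqrt (x v + x (v + ((1,0):Z2)))
  set sP := Real.sqrt (x v + x (v + ((-1,0):Z2)))
  set sB := Real.sqrt (x v + x (v + ((0,1):Z2)))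
  set sQ := Real.sqrt (x v + x (v + ((0,-1):Z2)))
  rw [← mA, ← mP, ← mB, ← mQ]
  ring
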